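/- arXiv:1611.09515 — 8 statements merged into one kernel-verified Lean document; each statement's English description precedes it below -/
import Mathlib

section
/- In the gadget game D(X_1, ..., X_k, x; Y), for any pure Nash equilibrium s: s(Y) = x if and only if there exists i with s(X_i) = x; and s(Y) = ¬x if and only if s(X_i) = ¬x for all i. -/
/-- In the gadget `D(X_1, ..., X_k, x; Y)`, for any pure Nash equilibrium:
`Y` plays `x` iff some `X_i` plays `x`, and `Y` plays `¬x` iff all `X_i` play `¬x`.
Here `payoff c` is `Y`'s payoff for picking colour `c`: the number of the `X_i` playing `c`,
plus `k - 1` if `c = x` (from the auxiliary player of weight `k - 1` fixed at `x`).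
The Nash equilibrium condition for `Y` is that `y` maximises this payoff
(the `X_i` have no predecessors, so any of their choices is a best response). -/
theorem stmt_2 (k : ℕ) (hk : 1 ≤ k) (x : Bool) (s : Fin k → Bool) (y : Bool)
    (payoff : Bool → ℕ)
    (hpay : ∀ c, payoff c =
      (Finset.univ.filter (fun i => s i = c)).card + (if c = x then k - 1 else 0))
    (hNE : ∀ c : Bool, payoff c ≤ payoff y) :
    (y = x ↔ ∃ i, s i = x) ∧ (y = !x ↔ ∀ i, s i = !x) := by
  set A := (Finset.univ.filter (fun i => s i = x)).card with hA
  set B := (Finset.univ.filter (fun i => s i = !x)).card with hB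
  have hsum : A + B = k := by
    rw [hA, hB]
    have : ∀ i : Fin k, (s i = !x) ↔ ¬ (s i = x) := by
      intro i; cases x <;> cases h : s i <;> simp
    rw [Finset.filter_congr (fun i _ => this i)]
    rw [Finset.card_filter_add_card_filter_not]
    simp
  have hx : payoff x = A + (k - 1) := by rw [hpay]; simp [hA]
  have hnx : payoff (!x) = B := by
    rw [hpay]; have : (!x) ≠ x := by cases x <;> simp
    simp [this, hB]
  by_cases hy : y = x
  · have h1 := hNE (!x)
    rw [hy, hx, hnx] at h1
    have hApos : 1 ≤ A := by omega
    obtain ⟨i, hi⟩ := Finset.card_pos.mp hApos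
    simp only [Finset.mem_filter] at hi
    constructor
    · constructor
      · intro _; exact ⟨i, hi.2⟩
      · intro _; exact hy
    · have hyx : y ≠ !x := by rw [hy]; cases x <;> simp
      constructor
      · intro h; exact absurd h hyx
      · intro h
        exact absurd (hi.2 ▸ h i) (by cases x <;> simp)
  · have hy' : y = !x := by cases x <;> cases y <;> simp_all
    have h1 := hNE x
    rw [hy', hx, hnx] at h1
    have hA0 : A = 0 := by omega
    have hall : ∀ i, s i = !x := by
      intro i
      by_contra hni
      have hsi : s i = x := by cases x <;> cases h : s i <;> simp_all
      have : i ∈ Finset.univ.filter (fun i => s i = x) := by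
        simp [hsi]
      rw [hA, Finset.card_eq_zero] at hA0
      simp [hA0] at this
    constructor
    · have hyx : y ≠ x := hy
      constructor
      · intro h; exact absurd h hyx
      · intro ⟨i, hi⟩
        exact absurd (hall i ▸ hi) (by cases x <;> simp)
    · exact ⟨fun _ => hall, fun _ => hy'⟩
end

section
/- Let s be a pure Nash equilibrium of a coordination game on an unweighted colour-complete connected complete graph without bonuses, and let ⪰* be any total order on the colour set M extending the acyclic relation ≻_s. Then the joint strategy SP(⪰*), defined by SP(⪰*)(i) = max_{⪰*} C(i), equals s. Consequently, every pure Nash equilibrium of such a game arises as SP(⪰) for some total order ⪰ on M. -/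
/-- Let `s` be a pure Nash equilibrium of a coordination game on an unweighted complete
directed graph without bonuses (the payoff of `i` for colour `c` is the number of other
players choosing `c`), and let `r` be any total order on colours extending the relation
`≻_s` (`x ≻_s y` iff some player `i` has `x, y ∈ C i` and `s i = x`).  Then the strategy
`SP(r)` assigning each player the `r`-maximal colour of `C i` equals `s`, i.e. `s i` is
the `r`-maximum of `C i` for every `i`.  Consequently, every pure Nash equilibrium of
such a game arises as `SP(r')` for some total order `r'`. -/
theorem stmt_5 {V M : Type*} [Fintype V]
    (C : V → Finset M) (hC : ∀ i, (C i).Nonempty)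
    (s : V → M) (hs : ∀ i, s i ∈ C i)
    (hNE : ∀ i, ∀ c ∈ C i,
      Set.ncard {j : V | j ≠ i ∧ s j = c} ≤ Set.ncard {j : V | j ≠ i ∧ s j = s i})
    (r : M → M → Prop) [IsLinearOrder M r]
    (hext : ∀ x y, (∃ i, x ∈ C i ∧ y ∈ C i ∧ s i = x) → r x y) :
    (∀ i, ∀ c ∈ C i, r (s i) c) ∧
    (∀ s' : V → M, (∀ i, s' i ∈ C i) →
      (∀ i, ∀ c ∈ C i,
        Set.ncard {j : V | j ≠ i ∧ s' j = c} ≤ Set.ncard {j : V | j ≠ i ∧ s' j = s' i}) →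
      ∃ r' : M → M → Prop, IsLinearOrder M r' ∧ ∀ i, ∀ c ∈ C i, r' (s' i) c) := by
  constructor
  · intro i c hc
    exact hext _ _ ⟨i, hs i, hc, rfl⟩
  · intro s' hs' hNE'
    classical
    letI : LinearOrder M := linearOrderOfSTO WellOrderingRel
    set n : M → ℕ := fun x => Set.ncard {j : V | s' j = x} with hn
    refine ⟨fun x y => n y < n x ∨ (n x = n y ∧ x ≤ y),
      { refl := fun x => Or.inr ⟨rfl, le_refl x⟩
        trans := ?_
        antisymm := ?_
        total := ?_ }, ?_⟩
    · rintro a b c (h1 | ⟨h1, h1'⟩) (h2 | ⟨h2, h2'⟩)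
      · exact Or.inl (h2.trans h1)
      · exact Or.inl (h2 ▸ h1)
      · exact Or.inl (h1 ▸ h2)
      · exact Or.inr ⟨h1.trans h2, h1'.trans h2'⟩
    · rintro a b (h1 | ⟨h1, h1'⟩) (h2 | ⟨h2, h2'⟩)
      · exact absurd h2 (not_lt_of_gt h1)
      · exact absurd h1 (h2 ▸ lt_irrefl _)
      · exact absurd h2 (h1 ▸ lt_irrefl _)
      · exact le_antisymm h1' h2'
    · intro a b
      rcases lt_trichotomy (n a) (n b) with h | h | h
      · exact Or.inr (Or.inl h)
      · rcases le_total a b with h' | h'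
        · exact Or.inl (Or.inr ⟨h, h'⟩)
        · exact Or.inr (Or.inr ⟨h.symm, h'⟩)
      · exact Or.inl (Or.inl h)
    · intro i c hc
      by_cases hceq : c = s' i
      · exact Or.inr ⟨by rw [hceq], hceq ▸ le_refl c⟩
      · left
        have hfin : ({j : V | s' j = s' i}).Finite := Set.toFinite _
        have h1 : {j : V | j ≠ i ∧ s' j = c} = {j : V | s' j = c} := by
          ext j
          simp only [Set.mem_setOf_eq, and_iff_right_iff_imp]
          rintro hj rfl
          exact hceq hj.symm
        have h2 : {j : V | j ≠ i ∧ s' j = s' i} = {j : V | s' j = s' i} \ {i} := by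
          ext j
          simp [Set.mem_diff, and_comm]
        have h3 : ({j : V | s' j = s' i} \ {i}).ncard + 1 = n (s' i) := by
          exact Set.ncard_diff_singleton_add_one (by simp) hfin
        have := hNE' i c hc
        rw [h1, h2] at this
        have h4 : n c = Set.ncard {j : V | s' j = c} := rfl
        omega
end

section
/- In the game of Example: players are all unordered pairs {x,y} of distinct colours from M = {1,...,m} arranged as a complete directed graph (all players mutually connected), with C({x,y}) = {x,y}. For the total order m ⪰ m−1 ⪰ ... ⪰ 1, the induced joint strategy SP(⪰) (each player picks its ⪰-maximal available colour) is a pure Nash equilibrium, in which exactly x−1 players choose colour x for each x ∈ M, and each player choosing colour x receives payoff x−2. -/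
section Aux

abbrev PL (m : ℕ) := {p : Fin m × Fin m // p.1 < p.2}

def fiberEquiv (m : ℕ) (v : Fin m) :
    {p : PL m // p.val.2 = v} ≃ Fin v.val where
  toFun q := ⟨q.val.val.1.val, by
    have h := q.val.prop
    have h2 : q.val.val.2 = v := q.prop
    have h3 : q.val.val.1.val < q.val.val.2.val := h
    rw [h2] at h3; exact h3⟩
  invFun i := ⟨⟨(⟨i.val, i.prop.trans v.isLt⟩, v), i.prop⟩, rfl⟩
  left_inv q := by
    apply Subtype.ext; apply Subtype.ext
    exact Prod.ext rfl q.prop.symm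
  right_inv i := rfl

lemma aux_fiber (m : ℕ) (v : Fin m) :
    Set.ncard {p : PL m | p.val.2 = v} = v.val := by
  rw [← Nat.card_coe_set_eq]
  have e : ↥{p : PL m | p.val.2 = v} ≃ Fin v.val :=
    (Equiv.setCongr rfl).trans (fiberEquiv m v)
  rw [Nat.card_congr e, Nat.card_eq_fintype_card, Fintype.card_fin]

def fiberNeEquiv (m : ℕ) (p : PL m) :
    {q : PL m // q ≠ p ∧ q.val.2 = p.val.2} ≃ {i : Fin p.val.2.val // i.val ≠ p.val.1.val} where
  toFun q := ⟨⟨q.val.val.1.val, by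
      have h : q.val.val.1.val < q.val.val.2.val := q.val.prop
      have h2 : q.val.val.2 = p.val.2 := q.prop.2
      rw [h2] at h; exact h⟩, by
      intro hcon
      apply q.prop.1
      apply Subtype.ext; apply Prod.ext
      · exact Fin.ext hcon
      · exact q.prop.2⟩
  invFun i := ⟨⟨(⟨i.val.val, i.val.prop.trans p.val.2.isLt⟩, p.val.2), i.val.prop⟩,
    ⟨by
      intro hcon
      exact i.prop (congrArg (fun q : PL m => q.val.1.val) hcon), rfl⟩⟩
  left_inv q := by
    apply Subtype.ext; apply Subtype.ext
    exact Prod.ext rfl q.prop.2.symm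
  right_inv i := rfl

lemma card_fin_ne (n c : ℕ) (hc : c < n) :
    Nat.card {i : Fin n // i.val ≠ c} = n - 1 := by
  have h : ∀ i : Fin n, i.val ≠ c ↔ ¬ (i = ⟨c, hc⟩) := fun i => by
    simp [Fin.ext_iff]
  rw [Nat.card_eq_fintype_card,
    Fintype.card_congr (Equiv.subtypeEquivRight h),
    Fintype.card_subtype_compl, Fintype.card_subtype_eq, Fintype.card_fin]

end Aux

/-- The example game: players are the pairs `{x,y}` of distinct colours from `Fin m`
(represented as ordered pairs with `p.1 < p.2`), arranged in a complete directed graph,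
with colour set `{p.1, p.2}` for player `p`.  For the natural total order on `Fin m`,
the induced strategy `SP` (every player picks its larger colour, i.e. `p.2`) is a pure
Nash equilibrium; exactly `v` players choose colour `v` (so, in the paper's 1-based
numbering, colour `x` is chosen by `x - 1` players), and a player choosing colour `v`
receives payoff `v - 1` (the paper's `x - 2`). -/
theorem stmt_6 (m : ℕ) (hm : 2 ≤ m) :
    let P := {p : Fin m × Fin m // p.1 < p.2}
    let s : P → Fin m := fun p => p.val.2
    let payoff : P → Fin m → ℕ := fun p c => Set.ncard {p' : P | p' ≠ p ∧ s p' = c}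
    (∀ p : P, ∀ c : Fin m, (c = p.val.1 ∨ c = p.val.2) → payoff p c ≤ payoff p (s p)) ∧
    (∀ v : Fin m, Set.ncard {p : P | s p = v} = v.val) ∧
    (∀ p : P, payoff p (s p) = p.val.2.val - 1) := by
  intro P s payoff
  have hlt : ∀ p : P, p.val.1.val < p.val.2.val := fun p => p.prop
  -- payoff at own colour
  have hown : ∀ p : P, payoff p (s p) = p.val.2.val - 1 := by
    intro p
    show Set.ncard {p' : P | p' ≠ p ∧ p'.val.2 = p.val.2} = p.val.2.val - 1
    rw [← Nat.card_coe_set_eq]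
    have e : ↥{p' : P | p' ≠ p ∧ p'.val.2 = p.val.2} ≃
        {i : Fin p.val.2.val // i.val ≠ p.val.1.val} :=
      (Equiv.setCongr rfl).trans (fiberNeEquiv m p)
    rw [Nat.card_congr e, card_fin_ne _ _ (hlt p)]
  -- payoff at the other colour
  have hother : ∀ p : P, payoff p p.val.1 = p.val.1.val := by
    intro p
    show Set.ncard {p' : P | p' ≠ p ∧ p'.val.2 = p.val.1} = p.val.1.val
    have hset : {p' : P | p' ≠ p ∧ p'.val.2 = p.val.1} = {p' : P | p'.val.2 = p.val.1} := by
      ext q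
      simp only [Set.mem_setOf_eq, and_iff_right_iff_imp]
      intro hq hqp
      rw [hqp] at hq
      have h1 := congrArg Fin.val hq
      have h2 := hlt p
      omega
    rw [hset, aux_fiber]
  refine ⟨?_, ?_, hown⟩
  · intro p c hc
    rcases hc with h | h
    · rw [h, hown, hother]
      have := hlt p
      omega
    · rw [h]
  · intro v
    exact aux_fiber m v
end

section
/- Consider a coordination game with colour set M = {0,1} on a weighted directed graph. Define F : joint strategies → joint strategies as the result of the following process starting from s: repeatedly, while some player j with 1 ∈ C(j) currently playing 0 would strictly gain by switching to 1 (given the current strategies), switch that player to 1. Then F(s) is well-defined (the process terminates), F is monotone with respect to the pointwise order (s ⪯ s' implies F(s) ⪯ F(s')), and every pure Nash equilibrium is a fixed point of F. -/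
/-- Two-colour coordination game on a weighted directed graph (colours `false = 0`,
`true = 1`).  `Step s s'` holds when `s'` is obtained from `s` by switching one player
who plays `0`, has `1` available, and strictly gains by switching, to `1`.  Then:
(1) from every joint strategy the greedy switching process terminates in a unique
result, so `F` is well-defined; (2) `F` is monotone for the pointwise order; and
(3) every pure Nash equilibrium is a fixed point of `F` (it is terminal, so the process
started from it returns it unchanged). -/
theorem stmt_8 {V : Type*} [Fintype V] [DecidableEq V]
    (E : V → V → Prop) [DecidableRel E]
    (w : V → V → ℚ) (hw : ∀ i j, 0 ≤ w i j)
    (C : V → Finset Bool) (β : V → Bool → ℤ)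
    (payoff : V → Bool → (V → Bool) → ℚ)
    (hpayoff : ∀ i c s, payoff i c s =
      (∑ j ∈ Finset.univ.filter (fun j => E j i ∧ s j = c), w j i) + (β i c : ℚ))
    (Step : (V → Bool) → (V → Bool) → Prop)
    (hStep : ∀ s s', Step s s' ↔ ∃ j, s j = false ∧ true ∈ C j ∧
      payoff j false s < payoff j true s ∧ s' = Function.update s j true) :
    (∀ s : V → Bool, ∃! t, Relation.ReflTransGen Step s t ∧ ∀ u, ¬ Step t u) ∧
    (∀ s s' t t', (∀ i, s i ≤ s' i) →
      Relation.ReflTransGen Step s t → (∀ u, ¬ Step t u) →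
      Relation.ReflTransGen Step s' t' → (∀ u, ¬ Step t' u) →
      ∀ i, t i ≤ t' i) ∧
    (∀ s : V → Bool, (∀ i, s i ∈ C i) →
      (∀ i, ∀ c ∈ C i, payoff i c s ≤ payoff i (s i) s) →
      ∀ u, ¬ Step s u) := by
  have bool_le : ∀ a b : Bool, a = true → a ≤ b → b = true := by decide
  have bool_le' : ∀ a b : Bool, b = false → a ≤ b → a = false := by decide
  -- monotonicity of payoff
  have pmt : ∀ (s s' : V → Bool), (∀ i, s i ≤ s' i) →
      ∀ i, payoff i true s ≤ payoff i true s' := by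
    intro s s' h i
    rw [hpayoff, hpayoff]
    have hsub : (Finset.univ.filter (fun j => E j i ∧ s j = true)) ⊆
        (Finset.univ.filter (fun j => E j i ∧ s' j = true)) := by
      intro j hj
      simp only [Finset.mem_filter] at *
      exact ⟨hj.1, hj.2.1, bool_le _ _ hj.2.2 (h j)⟩
    have := Finset.sum_le_sum_of_subset_of_nonneg hsub (fun j _ _ => hw j i)
    linarith
  have pmf : ∀ (s s' : V → Bool), (∀ i, s i ≤ s' i) →
      ∀ i, payoff i false s' ≤ payoff i false s := by
    intro s s' h i
    rw [hpayoff, hpayoff]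
    have hsub : (Finset.univ.filter (fun j => E j i ∧ s' j = false)) ⊆
        (Finset.univ.filter (fun j => E j i ∧ s j = false)) := by
      intro j hj
      simp only [Finset.mem_filter] at *
      exact ⟨hj.1, hj.2.1, bool_le' _ _ hj.2.2 (h j)⟩
    have := Finset.sum_le_sum_of_subset_of_nonneg hsub (fun j _ _ => hw j i)
    linarith
  have upd_ge : ∀ (s : V → Bool) (j : V), ∀ i, s i ≤ Function.update s j true i := by
    intro s j i
    rcases eq_or_ne i j with rfl | hne
    · simp
    · rw [Function.update_of_ne hne]
  have step_le : ∀ s s', Step s s' → ∀ i, s i ≤ s' i := by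
    intro s s' h
    rw [hStep] at h
    obtain ⟨j, -, -, -, rfl⟩ := h
    exact upd_ge s j
  have rtg_le : ∀ s t, Relation.ReflTransGen Step s t → ∀ i, s i ≤ t i := by
    intro s t h
    induction h with
    | refl => exact fun i => le_refl _
    | tail _ hbc ih => exact fun i => le_trans (ih i) (step_le _ _ hbc i)
  -- terminal states absorb
  have term_id : ∀ t, (∀ u, ¬ Step t u) → ∀ u, Relation.ReflTransGen Step t u → u = t := by
    intro t hterm u h
    rcases h.cases_head with rfl | ⟨b, hb, -⟩
    · rfl
    · exact absurd hb (hterm b)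
  -- key: below a terminal state, steps stay below
  have key : ∀ (t' : V → Bool), (∀ u, ¬ Step t' u) → ∀ a, (∀ i, a i ≤ t' i) →
      ∀ b, Step a b → ∀ i, b i ≤ t' i := by
    intro t' hterm a hle b hab
    rw [hStep] at hab
    obtain ⟨j, hj0, hjC, hjp, rfl⟩ := hab
    have ht'j : t' j = true := by
      by_contra h
      have h' : t' j = false := by simpa using h
      apply hterm (Function.update t' j true)
      rw [hStep]
      refine ⟨j, h', hjC, ?_, rfl⟩
      calc payoff j false t' ≤ payoff j false a := pmf _ _ hle j
        _ < payoff j true a := hjp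
        _ ≤ payoff j true t' := pmt _ _ hle j
    intro i
    rcases eq_or_ne i j with rfl | hne
    · simp [ht'j]
    · rw [Function.update_of_ne hne]; exact hle i
  have reach_le : ∀ (t' : V → Bool), (∀ u, ¬ Step t' u) → ∀ s t,
      Relation.ReflTransGen Step s t → (∀ i, s i ≤ t' i) → ∀ i, t i ≤ t' i := by
    intro t' hterm s t hrt
    induction hrt with
    | refl => exact fun h => h
    | tail _ hbc ih => exact fun hs => key t' hterm _ (ih hs) _ hbc
  -- measure
  have step_m : ∀ s s', Step s s' →
      (Finset.univ.filter fun i => s i = true).card <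
      (Finset.univ.filter fun i => s' i = true).card := by
    intro s s' h
    rw [hStep] at h
    obtain ⟨j, hj0, -, -, rfl⟩ := h
    apply Finset.card_lt_card
    have hsub : (Finset.univ.filter fun i => s i = true) ⊆
        (Finset.univ.filter fun i => Function.update s j true i = true) := by
      intro i hi
      simp only [Finset.mem_filter, Finset.mem_univ, true_and] at *
      rcases eq_or_ne i j with rfl | hne
      · simp
      · rwa [Function.update_of_ne hne]
    refine (Finset.ssubset_iff_of_subset hsub).mpr ⟨j, by simp, by simp [hj0]⟩
  -- existence of terminal states
  have exist : ∀ n (s : V → Bool),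
      Fintype.card V - (Finset.univ.filter fun i => s i = true).card ≤ n →
      ∃ t, Relation.ReflTransGen Step s t ∧ ∀ u, ¬ Step t u := by
    intro n
    induction n with
    | zero =>
      intro s hs
      by_cases hterm : ∀ u, ¬ Step s u
      · exact ⟨s, .refl, hterm⟩
      · push_neg at hterm
        obtain ⟨u, hu⟩ := hterm
        have h1 := step_m _ _ hu
        have h2 : (Finset.univ.filter fun i => u i = true).card ≤ Fintype.card V := by
          simpa using Finset.card_le_card (Finset.filter_subset _ (Finset.univ : Finset V))
        omega
    | succ n ih =>
      intro s hs
      by_cases hterm : ∀ u, ¬ Step s u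
      · exact ⟨s, .refl, hterm⟩
      · push_neg at hterm
        obtain ⟨u, hu⟩ := hterm
        have h1 := step_m _ _ hu
        have h2 : (Finset.univ.filter fun i => u i = true).card ≤ Fintype.card V := by
          simpa using Finset.card_le_card (Finset.filter_subset _ (Finset.univ : Finset V))
        obtain ⟨t, ht, htt⟩ := ih u (by omega)
        exact ⟨t, .head hu ht, htt⟩
  -- diamond / Church-Rosser
  have cr : ∀ a b c : V → Bool, Step a b → Step a c →
      ∃ d, Relation.ReflGen Step b d ∧ Relation.ReflTransGen Step c d := by
    intro a b c hb hc
    rw [hStep] at hb hc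
    obtain ⟨j, hj0, hjC, hjp, rfl⟩ := hb
    obtain ⟨k, hk0, hkC, hkp, rfl⟩ := hc
    rcases eq_or_ne j k with rfl | hjk
    · exact ⟨_, .refl, .refl⟩
    · refine ⟨Function.update (Function.update a j true) k true, .single ?_, .single ?_⟩
      · rw [hStep]
        refine ⟨k, ?_, hkC, ?_, rfl⟩
        · rwa [Function.update_of_ne (Ne.symm hjk)]
        · calc payoff k false (Function.update a j true)
              ≤ payoff k false a := pmf _ _ (upd_ge a j) k
            _ < payoff k true a := hkp
            _ ≤ payoff k true (Function.update a j true) := pmt _ _ (upd_ge a j) k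
      · rw [hStep]
        refine ⟨j, ?_, hjC, ?_, ?_⟩
        · rwa [Function.update_of_ne hjk]
        · calc payoff j false (Function.update a k true)
              ≤ payoff j false a := pmf _ _ (upd_ge a k) j
            _ < payoff j true a := hjp
            _ ≤ payoff j true (Function.update a k true) := pmt _ _ (upd_ge a k) j
        · exact (Function.update_comm (Ne.symm hjk) true true a).symm
  refine ⟨?_, ?_, ?_⟩
  · -- existence and uniqueness
    intro s
    obtain ⟨t, hrt, hterm⟩ := exist (Fintype.card V) s (Nat.sub_le _ _)
    refine ⟨t, ⟨hrt, hterm⟩, ?_⟩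
    rintro t' ⟨hrt', hterm'⟩
    obtain ⟨u, hu1, hu2⟩ := Relation.church_rosser cr hrt' hrt
    rw [← term_id t' hterm' u hu1, ← term_id t hterm u hu2]
  · intro s s' t t' hle hst hterm hst' hterm' i
    have h1 : ∀ i, s i ≤ t' i := fun i => le_trans (hle i) (rtg_le _ _ hst' i)
    exact reach_le t' hterm' s t hst h1 i
  · intro s hC hNash u hu
    rw [hStep] at hu
    obtain ⟨j, hj0, hjC, hjp, -⟩ := hu
    have := hNash j true hjC
    rw [hj0] at this
    linarith
end

section
/- In a two-colour coordination game on a weighted directed graph, for any joint strategy s, the joint strategy F(s) obtained by repeatedly switching (from 0 to 1) any player who currently plays 0, has 1 available, and strictly gains by switching, until no such player remains, is a pure Nash equilibrium, provided the initial strategy s assigns to each player with 0 ∈ C(i) the colour 0 and to every other player the colour 1. -/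
/-- In a two-colour coordination game on a weighted directed graph, starting from the
joint strategy `s₀` that assigns colour `0` (`false`) to every player who has it
available and `1` (`true`) to everyone else, any terminal result of the greedy
`0`-to-`1` switching process is a pure Nash equilibrium. -/
theorem stmt_9 {V : Type*} [Fintype V] [DecidableEq V]
    (E : V → V → Prop) [DecidableRel E]
    (w : V → V → ℚ) (hw : ∀ i j, 0 ≤ w i j)
    (C : V → Finset Bool) (hC : ∀ i, (C i).Nonempty) (β : V → Bool → ℤ)
    (payoff : V → Bool → (V → Bool) → ℚ)
    (hpayoff : ∀ i c s, payoff i c s =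
      (∑ j ∈ Finset.univ.filter (fun j => E j i ∧ s j = c), w j i) + (β i c : ℚ))
    (Step : (V → Bool) → (V → Bool) → Prop)
    (hStep : ∀ s s', Step s s' ↔ ∃ j, s j = false ∧ true ∈ C j ∧
      payoff j false s < payoff j true s ∧ s' = Function.update s j true)
    (s₀ : V → Bool) (hs₀ : ∀ i, s₀ i = if false ∈ C i then false else true)
    (t : V → Bool) (hreach : Relation.ReflTransGen Step s₀ t)
    (hterm : ∀ u, ¬ Step t u) :
    (∀ i, t i ∈ C i) ∧ ∀ i, ∀ c ∈ C i, payoff i c t ≤ payoff i (t i) t := by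
  -- Monotonicity of payoffs under a single false→true switch.
  have mono : ∀ (i j : V) (s : V → Bool), s j = false →
      payoff i true s ≤ payoff i true (Function.update s j true) ∧
      payoff i false (Function.update s j true) ≤ payoff i false s := by
    intro i j s hsj
    constructor
    · rw [hpayoff, hpayoff]
      apply add_le_add_left
      apply Finset.sum_le_sum_of_subset_of_nonneg
      · intro x hx
        simp only [Finset.mem_filter, Finset.mem_univ, true_and] at *
        refine ⟨hx.1, ?_⟩
        rcases eq_or_ne x j with rfl | h
        · simp
        · simpa [Function.update_of_ne h] using hx.2
      · intro x _ _; exact hw x i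
    · rw [hpayoff, hpayoff]
      apply add_le_add_left
      apply Finset.sum_le_sum_of_subset_of_nonneg
      · intro x hx
        simp only [Finset.mem_filter, Finset.mem_univ, true_and] at *
        refine ⟨hx.1, ?_⟩
        rcases eq_or_ne x j with rfl | h
        · simp at hx
        · simpa [Function.update_of_ne h] using hx.2
      · intro x _ _; exact hw x i
  -- Invariant along the process.
  have inv : ∀ s, Relation.ReflTransGen Step s₀ s →
      (∀ i, s i ∈ C i) ∧
      (∀ i, s i = true → false ∈ C i → payoff i false s ≤ payoff i true s) := by
    intro s hs
    induction hs with
    | refl =>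
      constructor
      · intro i
        rw [hs₀ i]
        by_cases h : false ∈ C i
        · simp [h]
        · rcases hC i with ⟨c, hc⟩
          cases c
          · exact absurd hc h
          · simpa [h] using hc
      · intro i hi hfi
        rw [hs₀ i] at hi
        simp [hfi] at hi
    | @tail b c hab hbc ih =>
      rw [hStep] at hbc
      obtain ⟨j, hj0, hjC, hjlt, rfl⟩ := hbc
      obtain ⟨ihm, ihp⟩ := ih
      constructor
      · intro i
        rcases eq_or_ne i j with rfl | h
        · simpa using hjC
        · simpa [Function.update_of_ne h] using ihm i
      · intro i hi hfi
        obtain ⟨m1, m2⟩ := mono i j b hj0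
        rcases eq_or_ne i j with rfl | h
        · exact le_trans m2 (le_trans hjlt.le m1)
        · rw [Function.update_of_ne h] at hi
          exact le_trans m2 (le_trans (ihp i hi hfi) m1)
  obtain ⟨hmem, hpay⟩ := inv t hreach
  refine ⟨hmem, ?_⟩
  intro i c hc
  cases c with
  | false =>
    cases ht : t i with
    | false => exact le_refl _
    | true => exact hpay i ht hc
  | true =>
    cases ht : t i with
    | false =>
      by_contra h

      apply hterm (Function.update t i true)
      rw [hStep]
      exact ⟨i, ht, hc, not_le.mp h, rfl⟩
    | true => exact le_refl _
end

section
/- For two-colour coordination games on weighted directed graphs, a monochromatic query q (asking all queried players to play colour 0) is consistent with some pure Nash equilibrium if and only if F(s_0)(i) = 0 for all queried players i, where s_0 is the ⪯-least joint strategy (each player plays 0 if available, else 1) and F is the greedy 0-to-1 switching operator. -/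
/-- For two-colour coordination games on weighted directed graphs, a monochromatic query
(asking every player in `Q` to play colour `0 = false`) is consistent with some pure Nash
equilibrium iff the terminal result `F(s₀)` of the greedy `0`-to-`1` switching process
started from the least joint strategy `s₀` assigns `0` to every queried player. -/
theorem stmt_10 {V : Type*} [Fintype V] [DecidableEq V]
    (E : V → V → Prop) [DecidableRel E]
    (w : V → V → ℚ) (hw : ∀ i j, 0 ≤ w i j)
    (C : V → Finset Bool) (hC : ∀ i, (C i).Nonempty) (β : V → Bool → ℤ)
    (payoff : V → Bool → (V → Bool) → ℚ)
    (hpayoff : ∀ i c s, payoff i c s =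
      (∑ j ∈ Finset.univ.filter (fun j => E j i ∧ s j = c), w j i) + (β i c : ℚ))
    (Step : (V → Bool) → (V → Bool) → Prop)
    (hStep : ∀ s s', Step s s' ↔ ∃ j, s j = false ∧ true ∈ C j ∧
      payoff j false s < payoff j true s ∧ s' = Function.update s j true)
    (s₀ : V → Bool) (hs₀ : ∀ i, s₀ i = if false ∈ C i then false else true)
    (Q : Finset V) (hQ : ∀ i ∈ Q, false ∈ C i) :
    (∃ s : V → Bool, (∀ i, s i ∈ C i) ∧
      (∀ i, ∀ c ∈ C i, payoff i c s ≤ payoff i (s i) s) ∧ ∀ i ∈ Q, s i = false) ↔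
    (∀ t : V → Bool, Relation.ReflTransGen Step s₀ t → (∀ u, ¬ Step t u) →
      ∀ i ∈ Q, t i = false) := by

  have monoT : ∀ (u v : V → Bool), (∀ k, u k = true → v k = true) →
      ∀ i, payoff i true u ≤ payoff i true v := by
    intro u v huv i
    rw [hpayoff, hpayoff]
    have hsub : Finset.univ.filter (fun j => E j i ∧ u j = true) ⊆
        Finset.univ.filter (fun j => E j i ∧ v j = true) := by
      intro k hk
      simp only [Finset.mem_filter, Finset.mem_univ, true_and] at hk ⊢
      exact ⟨hk.1, huv k hk.2⟩
    have := Finset.sum_le_sum_of_subset_of_nonneg hsub (fun k _ _ => hw k i)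
    linarith
  have monoF : ∀ (u v : V → Bool), (∀ k, u k = true → v k = true) →
      ∀ i, payoff i false v ≤ payoff i false u := by
    intro u v huv i
    rw [hpayoff, hpayoff]
    have hsub : Finset.univ.filter (fun j => E j i ∧ v j = false) ⊆
        Finset.univ.filter (fun j => E j i ∧ u j = false) := by
      intro k hk
      simp only [Finset.mem_filter, Finset.mem_univ, true_and] at hk ⊢
      refine ⟨hk.1, ?_⟩
      cases hku : u k
      · rfl
      · exact absurd (huv k hku) (by simp [hk.2])
    have := Finset.sum_le_sum_of_subset_of_nonneg hsub (fun k _ _ => hw k i)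
    linarith
  constructor
  · rintro ⟨s, hsC, hsN, hsQ⟩ t ht htm i hi
    clear htm
    have key : ∀ k, t k = true → s k = true := by
      induction ht with
      | refl =>
        intro k hk
        rw [hs₀ k] at hk
        by_cases hf : false ∈ C k
        · simp [hf] at hk
        · cases hsk : s k
          · exact absurd (hsk ▸ hsC k) hf
          · rfl
      | @tail b c hb hbc ih =>
        rw [hStep] at hbc
        obtain ⟨j, hjf, hjC, hjlt, rfl⟩ := hbc
        have hsj : s j = true := by
          cases hsj : s j
          · exfalso
            have h1 := monoT b s ih j
            have h2 := monoF b s ih j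
            have h3 := hsN j true hjC
            rw [hsj] at h3
            linarith
          · rfl
        intro k hk
        by_cases hkj : k = j
        · exact hkj ▸ hsj
        · rw [Function.update_of_ne hkj] at hk
          exact ih k hk
    cases hti : t i
    · rfl
    · exact absurd (key i hti) (by simp [hsQ i hi])
  · intro h
    have term : ∀ n (u : V → Bool),
        (Finset.univ.filter (fun i => u i = false)).card ≤ n →
        ∃ t, Relation.ReflTransGen Step u t ∧ ∀ v, ¬ Step t v := by
      intro n
      induction n with
      | zero =>
        intro u hu
        refine ⟨u, .refl, fun v hv => ?_⟩
        rw [hStep] at hv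
        obtain ⟨j, hjf, -, -, -⟩ := hv
        have hj : j ∈ Finset.univ.filter (fun i => u i = false) := by simp [hjf]
        have := Finset.card_pos.mpr ⟨j, hj⟩
        omega
      | succ n ih =>
        intro u hu
        by_cases hex : ∃ v, Step u v
        · obtain ⟨v, hv⟩ := hex
          have hv' := hv
          rw [hStep] at hv'
          obtain ⟨j, hjf, -, -, rfl⟩ := hv'
          have hcard : (Finset.univ.filter
              (fun i => Function.update u j true i = false)).card ≤ n := by
            have hsub : Finset.univ.filter (fun i => Function.update u j true i = false) ⊆
                (Finset.univ.filter (fun i => u i = false)).erase j := by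
              intro k hk
              simp only [Finset.mem_filter, Finset.mem_univ, true_and] at hk
              have hkj : k ≠ j := by
                intro hkj; subst hkj; simp at hk
              rw [Function.update_of_ne hkj] at hk
              rw [Finset.mem_erase]
              exact ⟨hkj, by simp [hk]⟩
            have hj : j ∈ Finset.univ.filter (fun i => u i = false) := by simp [hjf]
            have h1 := Finset.card_le_card hsub
            rw [Finset.card_erase_of_mem hj] at h1
            have h2 := Finset.card_pos.mpr ⟨j, hj⟩
            omega
          obtain ⟨t, ht, htmax⟩ := ih _ hcard
          exact ⟨t, .head hv ht, htmax⟩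
        · exact ⟨u, .refl, fun v hv => hex ⟨v, hv⟩⟩
    obtain ⟨t, ht, htmax⟩ := term _ s₀ le_rfl
    have inv : ∀ u, Relation.ReflTransGen Step s₀ u →
        (∀ i, u i ∈ C i) ∧
        (∀ i, u i = true → false ∈ C i → payoff i false u ≤ payoff i true u) := by
      intro u hu
      induction hu with
      | refl =>
        constructor
        · intro i
          rw [hs₀ i]
          by_cases hf : false ∈ C i
          · simpa [hf] using hf
          · obtain ⟨c, hc⟩ := hC i
            cases c
            · exact absurd hc hf
            · simpa [hf] using hc
        · intro i hti hfC
          rw [hs₀ i] at hti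
          simp [hfC] at hti
      | @tail b c hb hbc ih =>
        rw [hStep] at hbc
        obtain ⟨j, hjf, hjC, hjlt, rfl⟩ := hbc
        have hle : ∀ k, b k = true → Function.update b j true k = true := by
          intro k hk
          by_cases hkj : k = j
          · subst hkj; simp
          · rwa [Function.update_of_ne hkj]
        constructor
        · intro i
          by_cases hij : i = j
          · subst hij; simpa using hjC
          · rw [Function.update_of_ne hij]
            exact ih.1 i
        · intro i hti hfC
          have m1 := monoF b (Function.update b j true) hle i
          have m2 := monoT b (Function.update b j true) hle i
          by_cases hij : i = j
          · subst hij; linarith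
          · rw [Function.update_of_ne hij] at hti
            have := ih.2 i hti hfC
            linarith
    obtain ⟨hCt, hBt⟩ := inv t ht
    refine ⟨t, hCt, ?_, h t ht htmax⟩
    intro i c hc
    cases hti : t i
    · cases c
      · exact le_refl _
      · by_contra hlt
        push_neg at hlt
        exact htmax _ ((hStep t (Function.update t i true)).mpr ⟨i, hti, hc, hlt, rfl⟩)
    · cases c
      · exact hBt i hti hc
      · exact le_refl _
end

section
/- For two-colour coordination games on weighted directed graphs, every pure Nash equilibrium is consistent with a monochromatic query q (asking all queried players to play colour 0) if and only if F'(s_1)(i) = 0 for all queried players i, where s_1 is the ⪯-greatest joint strategy (each player plays 1 if available, else 0) and F' is the greedy 1-to-0 switching operator. -/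
/-- For two-colour coordination games on weighted directed graphs, every pure Nash
equilibrium is consistent with a monochromatic query (asking every player in `Q` to play
colour `0 = false`) iff the terminal result `F'(s₁)` of the greedy `1`-to-`0` switching
process started from the greatest joint strategy `s₁` assigns `0` to every queried
player. -/
theorem stmt_11 {V : Type*} [Fintype V] [DecidableEq V]
    (E : V → V → Prop) [DecidableRel E]
    (w : V → V → ℚ) (hw : ∀ i j, 0 ≤ w i j)
    (C : V → Finset Bool) (hC : ∀ i, (C i).Nonempty) (β : V → Bool → ℤ)
    (payoff : V → Bool → (V → Bool) → ℚ)
    (hpayoff : ∀ i c s, payoff i c s =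
      (∑ j ∈ Finset.univ.filter (fun j => E j i ∧ s j = c), w j i) + (β i c : ℚ))
    (Step' : (V → Bool) → (V → Bool) → Prop)
    (hStep' : ∀ s s', Step' s s' ↔ ∃ j, s j = true ∧ false ∈ C j ∧
      payoff j true s < payoff j false s ∧ s' = Function.update s j false)
    (s₁ : V → Bool) (hs₁ : ∀ i, s₁ i = if true ∈ C i then true else false)
    (Q : Finset V) (hQ : ∀ i ∈ Q, false ∈ C i) :
    (∀ s : V → Bool, (∀ i, s i ∈ C i) →
      (∀ i, ∀ c ∈ C i, payoff i c s ≤ payoff i (s i) s) → ∀ i ∈ Q, s i = false) ↔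
    (∀ t : V → Bool, Relation.ReflTransGen Step' s₁ t → (∀ u, ¬ Step' t u) →
      ∀ i ∈ Q, t i = false) := by
  classical
  -- monotonicity of payoff
  have mono : ∀ (j : V) (s t : V → Bool), (∀ i, s i = true → t i = true) →
      payoff j true s ≤ payoff j true t ∧ payoff j false t ≤ payoff j false s := by
    intro j s t hst
    constructor
    · rw [hpayoff, hpayoff]
      apply add_le_add_left
      apply Finset.sum_le_sum_of_subset_of_nonneg
      · intro k hk
        simp only [Finset.mem_filter, Finset.mem_univ, true_and] at hk ⊢
        exact ⟨hk.1, hst k hk.2⟩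
      · intro k _ _; exact hw k j
    · rw [hpayoff, hpayoff]
      apply add_le_add_left
      apply Finset.sum_le_sum_of_subset_of_nonneg
      · intro k hk
        simp only [Finset.mem_filter, Finset.mem_univ, true_and] at hk ⊢
        refine ⟨hk.1, ?_⟩
        cases h : s k with
        | false => rfl
        | true => rw [hst k h] at hk; exact absurd hk.2 (by simp)
      · intro k _ _; exact hw k j
  -- invariant along the process
  have inv : ∀ t, Relation.ReflTransGen Step' s₁ t →
      (∀ i, t i ∈ C i) ∧
      (∀ i, t i = false → true ∈ C i → payoff i true t < payoff i false t) := by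
    intro t ht
    induction ht with
    | refl =>
      constructor
      · intro i
        rw [hs₁ i]
        split
        · assumption
        · rcases hC i with ⟨c, hc⟩
          cases c with
          | false => exact hc
          | true => exact absurd hc (by assumption)
      · intro i hfi htr
        rw [hs₁ i, if_pos htr] at hfi
        exact absurd hfi (by simp)
    | @tail b c hb hstep ih =>
      rcases (hStep' _ _).1 hstep with ⟨j, hjt, hjf, hjlt, rfl⟩
      have hle : ∀ i, Function.update b j false i = true → b i = true := by
        intro i hi
        by_cases h : i = j
        · subst h; rw [Function.update_self] at hi; exact absurd hi (by simp)
        · rwa [Function.update_of_ne h] at hi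
      have hm := mono
      constructor
      · intro i
        by_cases h : i = j
        · subst h; rw [Function.update_self]; exact hjf
        · rw [Function.update_of_ne h]; exact ih.1 i
      · intro i hfi htr
        have hlt : payoff i true b < payoff i false b := by
          by_cases h : i = j
          · subst h; exact hjlt
          · rw [Function.update_of_ne h] at hfi
            exact ih.2 i hfi htr
        have m := mono i (Function.update b j false) b hle
        exact lt_of_le_of_lt m.1 (lt_of_lt_of_le hlt m.2)
  -- terminal points are Nash equilibria
  have termNE : ∀ t, Relation.ReflTransGen Step' s₁ t → (∀ u, ¬ Step' t u) →
      (∀ i, t i ∈ C i) ∧ (∀ i, ∀ c ∈ C i, payoff i c t ≤ payoff i (t i) t) := by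
    intro t ht hterm
    obtain ⟨h1, h2⟩ := inv t ht
    refine ⟨h1, ?_⟩
    intro i c hc
    cases hti : t i with
    | true =>
      cases c with
      | true => exact le_rfl
      | false =>
        by_contra hlt
        push_neg at hlt
        exact hterm (Function.update t i false)
          ((hStep' _ _).2 ⟨i, hti, hc, hlt, rfl⟩)
    | false =>
      cases c with
      | false => exact le_rfl
      | true => exact (h2 i hti hc).le
  -- every Nash equilibrium is dominated by everything reachable from s₁
  have dom : ∀ s : V → Bool, (∀ i, s i ∈ C i) →
      (∀ i, ∀ c ∈ C i, payoff i c s ≤ payoff i (s i) s) →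
      ∀ t, Relation.ReflTransGen Step' s₁ t → ∀ i, s i = true → t i = true := by
    intro s hsC hsNE t ht
    induction ht with
    | refl =>
      intro i hsi
      have : true ∈ C i := hsi ▸ hsC i
      rw [hs₁ i, if_pos this]
    | @tail b c hb hstep ih =>
      rcases (hStep' _ _).1 hstep with ⟨j, hjt, hjf, hjlt, rfl⟩
      intro i hsi
      by_cases h : i = j
      · exfalso
        subst h
        have h1 : payoff i false s ≤ payoff i true s := by
          have := hsNE i false hjf
          rwa [hsi] at this
        have m := mono i s b ih
        exact absurd hjlt (not_lt.2 (m.2.trans (h1.trans m.1)))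
      · rw [Function.update_of_ne h]
        exact ih i hsi
  -- existence of a terminal point
  have exTerm : ∀ n (u : V → Bool),
      (Finset.univ.filter (fun i => u i = true)).card ≤ n →
      Relation.ReflTransGen Step' s₁ u →
      ∃ t, Relation.ReflTransGen Step' s₁ t ∧ ∀ v, ¬ Step' t v := by
    intro n
    induction n with
    | zero =>
      intro u hcard hu
      refine ⟨u, hu, ?_⟩
      intro v hv
      rcases (hStep' _ _).1 hv with ⟨j, hjt, _, _, _⟩
      have : j ∈ Finset.univ.filter (fun i => u i = true) := by
        simp [hjt]
      have := Finset.card_pos.2 ⟨j, this⟩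
      omega
    | succ n ihn =>
      intro u hcard hu
      by_cases hterm : ∀ v, ¬ Step' u v
      · exact ⟨u, hu, hterm⟩
      · push_neg at hterm
        obtain ⟨v, hv⟩ := hterm
        rcases (hStep' _ _).1 hv with ⟨j, hjt, _, _, hveq⟩
        have hsub : Finset.univ.filter (fun i => v i = true) ⊆
            Finset.univ.filter (fun i => u i = true) := by
          intro k hk
          simp only [Finset.mem_filter, Finset.mem_univ, true_and] at hk ⊢
          subst hveq
          by_cases h : k = j
          · subst h; rw [Function.update_self] at hk; exact absurd hk (by simp)
          · rwa [Function.update_of_ne h] at hk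
        have hjnot : j ∉ Finset.univ.filter (fun i => v i = true) := by
          simp [hveq]
        have hjin : j ∈ Finset.univ.filter (fun i => u i = true) := by
          simp [hjt]
        have hlt : (Finset.univ.filter (fun i => v i = true)).card <
            (Finset.univ.filter (fun i => u i = true)).card :=
          Finset.card_lt_card ((Finset.ssubset_iff_of_subset hsub).2 ⟨j, hjin, hjnot⟩)
        exact ihn v (by omega) (hu.tail hv)
  constructor
  · intro H t ht hterm i hiQ
    obtain ⟨h1, h2⟩ := termNE t ht hterm
    exact H t h1 h2 i hiQ
  · intro H s hsC hsNE i hiQ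
    obtain ⟨t, ht, hterm⟩ := exTerm _ s₁ le_rfl Relation.ReflTransGen.refl
    have htf : t i = false := H t ht hterm i hiQ
    cases hsi : s i with
    | false => rfl
    | true => rw [dom s hsC hsNE t ht i hsi] at htf; exact absurd htf (by simp)
end

section
/- In a coordination game on a directed acyclic graph, every partial joint strategy defined on a set D of players that is closed under predecessors (and in which each player in D plays a best response to the others in D) can be extended to a pure Nash equilibrium of the whole game by processing the remaining players in topological order and assigning each its best response. In particular, every coordination game on a DAG has a pure Nash equilibrium. -/
/-- In a coordination game on a weighted DAG, every partial joint strategy defined on a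
set `D` of players closed under predecessors, in which each player of `D` plays a best
response, extends to a pure Nash equilibrium of the whole game.  (Taking `D = ∅`, every
coordination game on a DAG has a pure Nash equilibrium.) -/
theorem stmt_15 {V M : Type*} [Fintype V] [DecidableEq V] [DecidableEq M]
    (E : V → V → Prop) [DecidableRel E]
    (hacyc : ∀ v, ¬ Relation.TransGen E v v)
    (w : V → V → ℚ) (hw : ∀ i j, 0 ≤ w i j)
    (C : V → Finset M) (hC : ∀ i, (C i).Nonempty) (β : V → M → ℤ)
    (payoff : V → M → (V → M) → ℚ)
    (hpayoff : ∀ i c s, payoff i c s =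
      (∑ j ∈ Finset.univ.filter (fun j => E j i ∧ s j = c), w j i) + (β i c : ℚ))
    (D : Set V) (hD : ∀ i ∈ D, ∀ j, E j i → j ∈ D)
    (s : V → M)
    (hsD : ∀ i ∈ D, s i ∈ C i ∧ ∀ c ∈ C i, payoff i c s ≤ payoff i (s i) s) :
    ∃ t : V → M, (∀ i ∈ D, t i = s i) ∧ (∀ i, t i ∈ C i) ∧
      ∀ i, ∀ c ∈ C i, payoff i c t ≤ payoff i (t i) t := by
  classical
  have htrans : IsTrans V (Relation.TransGen E) := ⟨fun _ _ _ => Relation.TransGen.trans⟩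
  have hirr : IsIrrefl V (Relation.TransGen E) := ⟨hacyc⟩
  have hwfT : WellFounded (Relation.TransGen E) :=
    Finite.wellFounded_of_trans_of_irrefl _
  have hwf : WellFounded E :=
    Subrelation.wf (fun h => Relation.TransGen.single h) hwfT
  set q : V → M → (V → M) → ℚ := fun i c g =>
    (∑ j ∈ Finset.univ.filter (fun j => E j i ∧ g j = c), w j i) + (β i c : ℚ) with hq
  have hqp : ∀ i c g, payoff i c g = q i c g := fun i c g => hpayoff i c g
  have hbest : ∀ i (g : V → M), ∃ b ∈ C i, ∀ c ∈ C i, q i c g ≤ q i b g := fun i g =>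
    (C i).exists_max_image (fun c => q i c g) (hC i)
  choose best hbestC hbestMax using hbest
  let F : ∀ i : V, (∀ j, E j i → M) → M := fun i f =>
    if i ∈ D then s i else best i (fun j => if h : E j i then f j h else s j)
  let t : V → M := hwf.fix F
  have hteq : ∀ i, t i = F i (fun j _ => t j) := fun i => hwf.fix_eq F i
  have hqcong : ∀ i c (g g' : V → M), (∀ j, E j i → g j = g' j) → q i c g = q i c g' := by
    intro i c g g' h
    simp only [hq]
    congr 1
    apply Finset.sum_congr
    · apply Finset.filter_congr
      intro j _
      constructor
      · rintro ⟨h1, h2⟩; exact ⟨h1, (h j h1).symm.trans h2⟩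
      · rintro ⟨h1, h2⟩; exact ⟨h1, (h j h1).trans h2⟩
    · intros; rfl
  have htD : ∀ i ∈ D, t i = s i := by
    intro i hi
    rw [hteq i]
    simp only [F, if_pos hi]
  refine ⟨t, htD, ?_, ?_⟩
  · intro i
    by_cases hi : i ∈ D
    · rw [htD i hi]; exact (hsD i hi).1
    · rw [hteq i]
      simp only [F, if_neg hi]
      exact hbestC i _
  · intro i c hc
    by_cases hi : i ∈ D
    · have hpred : ∀ j, E j i → t j = s j := fun j hj => htD j (hD i hi j hj)
      rw [hqp, hqp, hqcong i c t s hpred, htD i hi,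
        hqcong i (s i) t s hpred, ← hqp, ← hqp]
      exact (hsD i hi).2 c hc
    · have hti : t i = best i (fun j => if h : E j i then t j else s j) := by
        rw [hteq i]; simp only [F, if_neg hi]
      set g : V → M := fun j => if h : E j i then t j else s j with hg
      have hpred : ∀ j, E j i → t j = g j := by
        intro j hj; simp [hg, hj]
      rw [hqp, hqp, hqcong i c t g hpred, hti, hqcong i (best i g) t g hpred]
      exact hbestMax i g c hc
end
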